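/- Let B ⊆ ℝ³ be an open ball centered at the origin, and let a₁, a₂, a₃ be real analytic functions of one real variable, each nonvanishing on the relevant coordinate projection of B. Suppose f : B → ℝ is real analytic and satisfies the system a₁(x₁)·∂f/∂x₁ − a₂(x₂)·∂f/∂x₂ = 0 and a₂(x₂)·∂f/∂x₂ − a₃(x₃)·∂f/∂x₃ = 0 at every point of B. Then there exist an open set W̃ ⊆ B and real analytic univariate functions G₀, H₁, H₂, H₃ such that f(x₁,x₂,x₃) = G₀(H₁(x₁) + H₂(x₂) + H₃(x₃)) for all (x₁,x₂,x₃) ∈ W̃. -/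

import Mathlib

open MeasureTheory Set

/-- ∂f/∂x₁ for a function on ℝ³. -/
noncomputable def pd1 (f : ℝ × ℝ × ℝ → ℝ) (p : ℝ × ℝ × ℝ) : ℝ :=
  deriv (fun t => f (t, p.2.1, p.2.2)) p.1

/-- ∂f/∂x₂ for a function on ℝ³. -/
noncomputable def pd2 (f : ℝ × ℝ × ℝ → ℝ) (p : ℝ × ℝ × ℝ) : ℝ :=
  deriv (fun t => f (p.1, t, p.2.2)) p.2.1

/-- ∂f/∂x₃ for a function on ℝ³. -/
noncomputable def pd3 (f : ℝ × ℝ × ℝ → ℝ) (p : ℝ × ℝ × ℝ) : ℝ :=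
  deriv (fun t => f (p.1, p.2.1, t)) p.2.2

/-- 𝒢₁ = f₃ f₁₂ − f₁₃ f₂. -/
noncomputable def G1 (f : ℝ × ℝ × ℝ → ℝ) (p : ℝ × ℝ × ℝ) : ℝ :=
  pd3 f p * pd1 (pd2 f) p - pd1 (pd3 f) p * pd2 f p

/-- 𝒢₂ = f₃ f₁₂ − f₂₃ f₁. -/
noncomputable def G2 (f : ℝ × ℝ × ℝ → ℝ) (p : ℝ × ℝ × ℝ) : ℝ :=
  pd3 f p * pd1 (pd2 f) p - pd2 (pd3 f) p * pd1 f p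

/-- 𝒢₃ = f₁ f₂₃ − f₁₃ f₂. -/
noncomputable def G3 (f : ℝ × ℝ × ℝ → ℝ) (p : ℝ × ℝ × ℝ) : ℝ :=
  pd1 f p * pd2 (pd3 f) p - pd1 (pd3 f) p * pd2 f p

/-- The bad set 𝒵_{3,f}: common zero set of 𝒢₁, 𝒢₂, 𝒢₃. -/
noncomputable def badSet3 (f : ℝ × ℝ × ℝ → ℝ) : Set (ℝ × ℝ × ℝ) :=
  {p | G1 f p = 0 ∧ G2 f p = 0 ∧ G3 f p = 0}

section AuxLemmas
open Filter FormalMultilinearSeries Metric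

set_option maxHeartbeats 1000000

/-- An analytic real function has, locally, an analytic antiderivative. -/
lemma analytic_antideriv {g : ℝ → ℝ} {x₀ : ℝ} (hg : AnalyticAt ℝ g x₀) :
    ∃ G : ℝ → ℝ, ∀ᶠ x in nhds x₀, AnalyticAt ℝ G x ∧ HasDerivAt G (g x) x := by
  obtain ⟨p, hp⟩ := hg
  set c : ℕ → ℝ := p.coeff with hc
  set d : ℕ → ℝ := fun n => Nat.rec 0 (fun m _ => c m / (m + 1)) n with hd
  have hd0 : d 0 = 0 := rfl
  have hdS : ∀ n, d (n + 1) = c n / (n + 1) := fun n => rfl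
  set q : FormalMultilinearSeries ℝ ℝ ℝ := ofScalars ℝ d with hq
  have hqnorm : ∀ n, ‖q n‖ = |d n| := fun n => ofScalars_norm ℝ d n
  have hqcoeff : ∀ n, q.coeff n = d n := by
    intro n
    show (q n fun _ => 1) = d n
    rw [hq, ofScalars_apply_eq]
    simp
  -- choose r' < p.radius
  obtain ⟨r', hr'0, hr'rad⟩ : ∃ r' : NNReal, 0 < r' ∧ (r' : ENNReal) < p.radius := by
    rcases ENNReal.lt_iff_exists_nnreal_btwn.1 hp.radius_pos with ⟨r', h1, h2⟩
    exact ⟨r', by exact_mod_cast h1, h2⟩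
  -- q.radius ≥ r'
  obtain ⟨C, hC0, hCb⟩ := p.norm_mul_pow_le_of_lt_radius hr'rad
  have hqrad : (r' : ENNReal) ≤ q.radius := by
    apply q.le_radius_of_bound (max C (C * r'))
    intro n
    rw [hqnorm]
    cases n with
    | zero => simpa [hd0] using le_max_of_le_left hC0.le
    | succ m =>
      refine le_max_of_le_right ?_
      rw [hdS]
      have h1 : |c m / (m + 1)| ≤ |c m| := by
        rw [abs_div]
        apply div_le_self (abs_nonneg _)
        rw [abs_of_nonneg (by positivity)]
        have : (0:ℝ) ≤ m := Nat.cast_nonneg m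
        linarith
      have h2 : |c m| = ‖p m‖ := by
        rw [show ‖p m‖ = ‖p.coeff m‖ from norm_apply_eq_norm_coef, Real.norm_eq_abs]
      calc |c m / (m + 1)| * (r' : ℝ) ^ (m + 1)
          ≤ |c m| * (r' : ℝ) ^ (m + 1) := by
            apply mul_le_mul_of_nonneg_right h1 (by positivity)
        _ = (‖p m‖ * (r' : ℝ) ^ m) * r' := by rw [← h2]; ring
        _ ≤ C * r' := mul_le_mul_of_nonneg_right (hCb m) r'.2
  -- the antiderivative
  set G : ℝ → ℝ := fun x => ∑' n, d n * (x - x₀) ^ n with hG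
  have hqsum : ∀ y : ℝ, |y| < (r' : ℝ) → HasSum (fun n => d n * y ^ n) (G (x₀ + y)) := by
    intro y hy
    have hmem : y ∈ Metric.eball (0 : ℝ) q.radius := by
      rw [Metric.mem_eball, edist_zero_right]
      calc (‖y‖₊ : ENNReal) < r' := by
            exact_mod_cast hy
        _ ≤ q.radius := hqrad
    have := q.hasSum hmem
    have heq : (fun n => q n fun _ => y) = fun n => d n * y ^ n := by
      funext n
      rw [hq, ofScalars_apply_eq]
      simp [smul_eq_mul]
    rw [heq] at this
    convert this using 1
    · rfl
    rw [hG]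
    simp only [add_sub_cancel_left]
    exact this.tsum_eq
  -- G is analytic at x₀ with power series q
  have hGq : HasFPowerSeriesAt G q x₀ := by
    rw [hasFPowerSeriesAt_iff]
    filter_upwards [Metric.ball_mem_nhds (0:ℝ) (by exact_mod_cast hr'0 : (0:ℝ) < r')] with z hz
    rw [Metric.mem_ball, dist_zero_right, Real.norm_eq_abs] at hz
    have := hqsum z hz
    convert this using 1
    · rfl
    funext n
    rw [hqcoeff, smul_eq_mul]
    ring
  have hGanal : AnalyticAt ℝ G x₀ := ⟨q, hGq⟩
  -- g is the sum of its series eventually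
  have hpsum : ∀ᶠ z in nhds x₀, HasSum (fun n => (z - x₀) ^ n • c n) (g z) :=
    hasFPowerSeriesAt_iff'.1 hp
  obtain ⟨R, hR0, hRball⟩ : ∃ R : ℝ, 0 < R ∧ Metric.ball x₀ R ⊆
      {z | HasSum (fun n => (z - x₀) ^ n • c n) (g z)} ∩ Metric.ball x₀ (r' : ℝ) := by
    have h2 : Metric.ball x₀ (r' : ℝ) ∈ nhds x₀ :=
      Metric.ball_mem_nhds _ (by exact_mod_cast hr'0)
    rcases Metric.mem_nhds_iff.1 (inter_mem hpsum h2) with ⟨R, hR0, hR⟩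
    exact ⟨R, hR0, hR⟩
  -- R < r' may fail, shrink
  set R' : ℝ := min R (r' : ℝ) with hR'
  have hR'0 : 0 < R' := lt_min hR0 (by exact_mod_cast hr'0)
  -- derivative of each term
  set gser : ℕ → ℝ → ℝ := fun n x => d n * (x - x₀) ^ n with hgser
  set gser' : ℕ → ℝ → ℝ := fun n x => d n * (n * (x - x₀) ^ (n - 1)) with hgser'
  have hterm : ∀ n x, HasDerivAt (gser n) (gser' n x) x := by
    intro n x
    have h1 : HasDerivAt (fun x : ℝ => (x - x₀) ^ n) (n * (x - x₀) ^ (n - 1)) x := by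
      simpa [Pi.pow_def] using ((hasDerivAt_id x).sub_const x₀).pow n
    simpa [hgser, hgser'] using h1.const_mul (d n)
  set u : ℕ → ℝ := fun n => ‖p (n - 1)‖ * R' ^ (n - 1) with hu
  have hu_sum : Summable u := by
    have h1 : Summable (fun n => ‖p n‖ * R' ^ n) := by
      have hle : R'.toNNReal ≤ r' := by
        rw [Real.toNNReal_le_iff_le_coe]
        exact min_le_right R (r' : ℝ)
      have hlt : ((R'.toNNReal : NNReal) : ENNReal) < p.radius :=
        lt_of_le_of_lt (ENNReal.coe_le_coe.2 hle) hr'rad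
      have := p.summable_norm_mul_pow hlt
      simpa [Real.coe_toNNReal _ hR'0.le] using this
    have heq : (fun n => u (n + 1)) = fun n => ‖p n‖ * R' ^ n := by
      funext n; simp [hu]
    exact (summable_nat_add_iff 1).1 (heq ▸ h1)
  have hbound : ∀ n x, x ∈ Metric.ball x₀ R' → ‖gser' n x‖ ≤ u n := by
    intro n x hx
    rw [Metric.mem_ball, Real.dist_eq] at hx
    cases n with
    | zero => simp [hgser', hu]
    | succ m =>
      have hxm : |x - x₀| ^ m ≤ R' ^ m :=
        pow_le_pow_left₀ (abs_nonneg _) (le_of_lt hx) m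
      have hcm : |c m| = ‖p m‖ := by
        rw [show ‖p m‖ = ‖p.coeff m‖ from norm_apply_eq_norm_coef, Real.norm_eq_abs]
      have : ‖gser' (m+1) x‖ = |c m| * |x - x₀| ^ m := by
        rw [hgser']
        simp only [Real.norm_eq_abs, Nat.add_sub_cancel, hdS]
        rw [abs_mul, abs_mul, abs_div, abs_pow]
        have : |((m:ℝ) + 1)| = (m:ℝ) + 1 := abs_of_pos (by positivity)
        rw [Nat.cast_add, Nat.cast_one, this]
        field_simp
      rw [this, hu]
      simp only [Nat.add_sub_cancel]
      rw [hcm]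
      exact mul_le_mul_of_nonneg_left hxm (norm_nonneg _)
  have hg0 : Summable fun n => gser n x₀ := by
    apply summable_of_ne_finset_zero (s := {0})
    intro n hn
    simp only [Finset.mem_singleton] at hn
    simp [hgser, zero_pow hn]
  -- the derivative statement on the ball
  have hderiv : ∀ x ∈ Metric.ball x₀ R', HasDerivAt G (g x) x := by
    intro x hx
    have h := hasDerivAt_tsum_of_isPreconnected hu_sum Metric.isOpen_ball
      (convex_ball x₀ R').isPreconnected (fun n y _ => hterm n y) hbound
      (Metric.mem_ball_self hR'0) hg0 hx
    have hsum_x : HasSum (fun n => gser' n x) (g x) := by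
      have hx' : x ∈ Metric.ball x₀ R :=
        Metric.ball_subset_ball (min_le_left R (r' : ℝ)) hx
      have h1 := (hRball hx').1
      have h2 : HasSum (fun n => gser' (n + 1) x) (g x) := by
        have heq : (fun n => gser' (n + 1) x) = fun n => (x - x₀) ^ n • c n := by
          funext n
          rw [hgser']
          simp only [Nat.add_sub_cancel, hdS, smul_eq_mul, Nat.cast_add, Nat.cast_one]
          have hne : ((n : ℝ) + 1) ≠ 0 := by positivity
          field_simp
        rw [heq]
        exact h1
      have h3 := (hasSum_nat_add_iff (f := fun n => gser' n x) 1).1 h2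
      simpa [hgser'] using h3
    rw [hsum_x.tsum_eq] at h
    exact h
  refine ⟨G, ?_⟩
  filter_upwards [Metric.ball_mem_nhds x₀ hR'0, hGanal.eventually_analyticAt] with x hx hx2
  exact ⟨hx2, hderiv x hx⟩

/-- Local inverse of an analytic function with nonvanishing derivative is analytic. -/
lemma analytic_localInverse {h : ℝ → ℝ} {x₀ : ℝ} {m : ℝ} (hm : m ≠ 0)
    (hha : AnalyticAt ℝ h x₀) (hder : HasDerivAt h m x₀) :
    ∃ φ : ℝ → ℝ, φ (h x₀) = x₀ ∧ AnalyticAt ℝ φ (h x₀) ∧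
      (∀ᶠ x in nhds x₀, φ (h x) = x) ∧ (∀ᶠ z in nhds (h x₀), h (φ z) = z) ∧
      Filter.Tendsto φ (nhds (h x₀)) (nhds x₀) := by
  set i : ℝ ≃L[ℝ] ℝ := ContinuousLinearEquiv.unitsEquivAut ℝ (Units.mk0 m hm) with hi
  have hieq : (i : ℝ →L[ℝ] ℝ) = ContinuousLinearMap.smulRight (1 : ℝ →L[ℝ] ℝ) m := by
    apply ContinuousLinearMap.ext_ring
    simp [hi, ContinuousLinearEquiv.unitsEquivAut]
  have hstrict : HasStrictFDerivAt h (i : ℝ →L[ℝ] ℝ) x₀ := by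
    have h1 := hha.hasStrictFDerivAt
    have h2 : fderiv ℝ h x₀ = (i : ℝ →L[ℝ] ℝ) := by
      rw [hieq, ContinuousLinearMap.smulRight_one_eq_toSpanSingleton, ← hder.hasFDerivAt.fderiv]
    rwa [h2] at h1
  set φ : ℝ → ℝ := hstrict.localInverse h _ _ with hφ
  have hx0 : φ (h x₀) = x₀ := hstrict.localInverse_apply_image
  refine ⟨φ, hx0, ?_, hstrict.eventually_left_inverse, hstrict.eventually_right_inverse,
    hstrict.localInverse_tendsto⟩
  -- analyticity of the inverse
  obtain ⟨p, hp⟩ := hha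
  have hp1 : p 1 = (continuousMultilinearCurryFin1 ℝ ℝ ℝ).symm (i : ℝ →L[ℝ] ℝ) := by
    have hA : HasFDerivAt h (continuousMultilinearCurryFin1 ℝ ℝ ℝ (p 1)) x₀ :=
      hp.hasFDerivAt
    have hB : continuousMultilinearCurryFin1 ℝ ℝ ℝ (p 1) = (i : ℝ →L[ℝ] ℝ) := by
      rw [hieq, ContinuousLinearMap.smulRight_one_eq_toSpanSingleton, ← hder.hasFDerivAt.fderiv]
      exact hA.fderiv.symm ▸ hA.fderiv
    rw [← hB]
    simp
  set PH := hstrict.toOpenPartialHomeomorph h with hPH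
  have h0 : x₀ ∈ PH.source := hstrict.mem_toOpenPartialHomeomorph_source
  have hpPH : HasFPowerSeriesAt (↑PH) p x₀ := by
    rw [hPH, HasStrictFDerivAt.toOpenPartialHomeomorph_coe]
    exact hp
  have hsymm := PH.hasFPowerSeriesAt_symm h0 hpPH hp1
  have hcoe : (⇑PH.symm : ℝ → ℝ) = φ := rfl
  have hPHx : (PH : ℝ → ℝ) x₀ = h x₀ := by
    rw [hPH, HasStrictFDerivAt.toOpenPartialHomeomorph_coe]
  rw [hcoe, hPHx] at hsymm
  exact ⟨_, hsymm⟩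

lemma pd1_eq_fderiv {f : ℝ × ℝ × ℝ → ℝ} {q : ℝ × ℝ × ℝ} (hf : AnalyticAt ℝ f q) :
    fderiv ℝ f q (1, 0, 0) = pd1 f q := by
  have hj : HasDerivAt (fun t : ℝ => ((t, q.2.1, q.2.2) : ℝ × ℝ × ℝ)) ((1 : ℝ), (0 : ℝ), (0 : ℝ)) q.1 :=
    (hasDerivAt_id q.1).prodMk ((hasDerivAt_const q.1 q.2.1).prodMk (hasDerivAt_const q.1 q.2.2))
  have hfd : HasFDerivAt f (fderiv ℝ f q) q := hf.differentiableAt.hasFDerivAt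
  have hfd' : HasFDerivAt f (fderiv ℝ f q) ((q.1, q.2.1, q.2.2) : ℝ × ℝ × ℝ) := by
    simpa using hfd
  have := hfd'.comp_hasDerivAt q.1 hj
  exact (this.deriv).symm ▸ rfl

lemma pd2_eq_fderiv {f : ℝ × ℝ × ℝ → ℝ} {q : ℝ × ℝ × ℝ} (hf : AnalyticAt ℝ f q) :
    fderiv ℝ f q (0, 1, 0) = pd2 f q := by
  have hj : HasDerivAt (fun t : ℝ => ((q.1, t, q.2.2) : ℝ × ℝ × ℝ)) ((0 : ℝ), (1 : ℝ), (0 : ℝ)) q.2.1 :=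
    (hasDerivAt_const q.2.1 q.1).prodMk ((hasDerivAt_id q.2.1).prodMk (hasDerivAt_const q.2.1 q.2.2))
  have hfd : HasFDerivAt f (fderiv ℝ f q) q := hf.differentiableAt.hasFDerivAt
  have hfd' : HasFDerivAt f (fderiv ℝ f q) ((q.1, q.2.1, q.2.2) : ℝ × ℝ × ℝ) := by
    simpa using hfd
  have := hfd'.comp_hasDerivAt q.2.1 hj
  exact (this.deriv).symm ▸ rfl

lemma pd3_eq_fderiv {f : ℝ × ℝ × ℝ → ℝ} {q : ℝ × ℝ × ℝ} (hf : AnalyticAt ℝ f q) :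
    fderiv ℝ f q (0, 0, 1) = pd3 f q := by
  have hj : HasDerivAt (fun t : ℝ => ((q.1, q.2.1, t) : ℝ × ℝ × ℝ)) ((0 : ℝ), (0 : ℝ), (1 : ℝ)) q.2.2 :=
    (hasDerivAt_const q.2.2 q.1).prodMk ((hasDerivAt_const q.2.2 q.2.1).prodMk (hasDerivAt_id q.2.2))
  have hfd : HasFDerivAt f (fderiv ℝ f q) q := hf.differentiableAt.hasFDerivAt
  have hfd' : HasFDerivAt f (fderiv ℝ f q) ((q.1, q.2.1, q.2.2) : ℝ × ℝ × ℝ) := by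
    simpa using hfd
  have := hfd'.comp_hasDerivAt q.2.2 hj
  exact (this.deriv).symm ▸ rfl

lemma fderiv_decomp {f : ℝ × ℝ × ℝ → ℝ} {q : ℝ × ℝ × ℝ} (hf : AnalyticAt ℝ f q)
    (v : ℝ × ℝ × ℝ) :
    fderiv ℝ f q v = v.1 * pd1 f q + v.2.1 * pd2 f q + v.2.2 * pd3 f q := by
  have hv : v = v.1 • ((1 : ℝ), (0 : ℝ), (0 : ℝ)) + v.2.1 • ((0 : ℝ), (1 : ℝ), (0 : ℝ))
      + v.2.2 • ((0 : ℝ), (0 : ℝ), (1 : ℝ)) := by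
    simp [Prod.ext_iff]
  conv_lhs => rw [hv]
  simp only [map_add, _root_.map_smul, smul_eq_mul]
  rw [pd1_eq_fderiv hf, pd2_eq_fderiv hf, pd3_eq_fderiv hf]

lemma coord_package {a : ℝ → ℝ} {r : ℝ} (hr : 0 < r)
    (ha : ∀ t : ℝ, |t| < r → AnalyticAt ℝ a t) (ha0 : ∀ t : ℝ, |t| < r → a t ≠ 0) :
    ∃ (H φ : ℝ → ℝ) (δ ρ : ℝ), 0 < δ ∧ 0 < ρ ∧ φ (H 0) = 0 ∧
      (∀ t : ℝ, |t| < δ → |t| < r ∧ AnalyticAt ℝ H t ∧ φ (H t) = t) ∧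
      (∀ z : ℝ, |z - H 0| < ρ → AnalyticAt ℝ φ z ∧ H (φ z) = z ∧ |φ z| < δ ∧
        HasDerivAt φ (a (φ z)) z) := by
  have h0r : |(0 : ℝ)| < r := by simpa using hr
  have hainv : AnalyticAt ℝ (fun t => (a t)⁻¹) 0 := (ha 0 h0r).inv (ha0 0 h0r)
  obtain ⟨H, hH⟩ := analytic_antideriv hainv
  obtain ⟨hH0a, hH0d⟩ := hH.self_of_nhds
  have hm : (a 0)⁻¹ ≠ 0 := inv_ne_zero (ha0 0 h0r)
  obtain ⟨φ, hφ0, hφa, hleft, hright, htend⟩ := analytic_localInverse hm hH0a hH0d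
  have hball : ∀ᶠ x : ℝ in nhds 0, |x| < r := by
    filter_upwards [Metric.ball_mem_nhds (0 : ℝ) hr] with x hx
    simpa [Real.dist_eq] using hx
  obtain ⟨δ, hδ0, hδ⟩ := Metric.eventually_nhds_iff.1 ((hH.and hball).and hleft)
  have hδfacts : ∀ t : ℝ, |t| < δ →
      ((AnalyticAt ℝ H t ∧ HasDerivAt H ((a t)⁻¹) t) ∧ |t| < r) ∧ φ (H t) = t :=
    fun t ht => hδ (by simpa [Real.dist_eq] using ht)
  -- now the ρ-ball facts at H 0
  have hballδ : ∀ᶠ x : ℝ in nhds (0 : ℝ), |x| < δ := by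
    filter_upwards [Metric.ball_mem_nhds (0 : ℝ) hδ0] with x hx
    simpa [Real.dist_eq] using hx
  have hφδ : ∀ᶠ z in nhds (H 0), |φ z| < δ := by
    have := htend.eventually hballδ
    simpa [hφ0] using this
  obtain ⟨ρ, hρ0, hρ⟩ := Metric.eventually_nhds_iff.1
    ((hφa.eventually_analyticAt.and hright).and hφδ)
  refine ⟨H, φ, δ, ρ, hδ0, hρ0, hφ0, fun t ht => ?_, fun z hz => ?_⟩
  · exact ⟨(hδfacts t ht).1.2, (hδfacts t ht).1.1.1, (hδfacts t ht).2⟩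
  · have hz' := hρ (y := z) (by simpa [Real.dist_eq] using hz)
    obtain ⟨⟨hφz_an, hφz_inv⟩, hφz_δ⟩ := hz'
    refine ⟨hφz_an, hφz_inv, hφz_δ, ?_⟩
    -- derivative of φ at z
    have dφ : HasDerivAt φ (deriv φ z) z := hφz_an.differentiableAt.hasDerivAt
    have hHd : HasDerivAt H ((a (φ z))⁻¹) (φ z) := ((hδfacts _ hφz_δ).1.1).2
    have hcomp : HasDerivAt (H ∘ φ) ((a (φ z))⁻¹ * deriv φ z) z := hHd.comp z dφ
    have heq : (H ∘ φ) =ᶠ[nhds z] id := by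
      have hmem : {w : ℝ | dist w (H 0) < ρ} ∈ nhds z := by
        apply Metric.isOpen_ball.mem_nhds
        simpa [Metric.mem_ball, Real.dist_eq] using hz
      filter_upwards [hmem] with w hw
      exact ((hρ (y := w) hw).1).2
    have hid : HasDerivAt id ((a (φ z))⁻¹ * deriv φ z) z :=
      hcomp.congr_of_eventuallyEq heq.symm
    have huniq : (1 : ℝ) = (a (φ z))⁻¹ * deriv φ z := (hasDerivAt_id z).unique hid
    have hane : a (φ z) ≠ 0 := ha0 _ ((hδfacts _ hφz_δ).1.2)
    have : deriv φ z = a (φ z) := by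
      field_simp at huniq
      linarith
    rw [← this]
    exact dφ

end AuxLemmas

set_option maxHeartbeats 1000000 in
open Filter Metric in
/-- Solutions of the characteristic system `a₁ ∂₁f = a₂ ∂₂f = a₃ ∂₃f` on a ball
centered at the origin are locally of the form `G₀(H₁(x₁)+H₂(x₂)+H₃(x₃))`. -/
theorem stmt10 (B : Set (ℝ × ℝ × ℝ)) (r : ℝ) (hr : 0 < r) (hB : B = Metric.ball 0 r)
    (a₁ a₂ a₃ : ℝ → ℝ)
    (ha₁ : AnalyticOnNhd ℝ a₁ ((fun p : ℝ × ℝ × ℝ => p.1) '' B))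
    (ha₂ : AnalyticOnNhd ℝ a₂ ((fun p : ℝ × ℝ × ℝ => p.2.1) '' B))
    (ha₃ : AnalyticOnNhd ℝ a₃ ((fun p : ℝ × ℝ × ℝ => p.2.2) '' B))
    (ha₁0 : ∀ x ∈ (fun p : ℝ × ℝ × ℝ => p.1) '' B, a₁ x ≠ 0)
    (ha₂0 : ∀ x ∈ (fun p : ℝ × ℝ × ℝ => p.2.1) '' B, a₂ x ≠ 0)
    (ha₃0 : ∀ x ∈ (fun p : ℝ × ℝ × ℝ => p.2.2) '' B, a₃ x ≠ 0)
    (f : ℝ × ℝ × ℝ → ℝ) (hf : AnalyticOnNhd ℝ f B)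
    (hpde1 : ∀ p ∈ B, a₁ p.1 * pd1 f p - a₂ p.2.1 * pd2 f p = 0)
    (hpde2 : ∀ p ∈ B, a₂ p.2.1 * pd2 f p - a₃ p.2.2 * pd3 f p = 0) :
    ∃ W : Set (ℝ × ℝ × ℝ), IsOpen W ∧ W.Nonempty ∧ W ⊆ B ∧
      ∃ G₀ H₁ H₂ H₃ : ℝ → ℝ,
        AnalyticOnNhd ℝ H₁ ((fun p : ℝ × ℝ × ℝ => p.1) '' W) ∧
        AnalyticOnNhd ℝ H₂ ((fun p : ℝ × ℝ × ℝ => p.2.1) '' W) ∧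
        AnalyticOnNhd ℝ H₃ ((fun p : ℝ × ℝ × ℝ => p.2.2) '' W) ∧
        AnalyticOnNhd ℝ G₀
          ((fun p : ℝ × ℝ × ℝ => H₁ p.1 + H₂ p.2.1 + H₃ p.2.2) '' W) ∧
        ∀ p ∈ W, f p = G₀ (H₁ p.1 + H₂ p.2.1 + H₃ p.2.2) := by
  subst hB
  have h0r : |(0 : ℝ)| < r := by simpa using hr
  have hmemB : ∀ x y z : ℝ, |x| < r → |y| < r → |z| < r →
      ((x, y, z) : ℝ × ℝ × ℝ) ∈ Metric.ball (0 : ℝ × ℝ × ℝ) r := by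
    intro x y z hx hy hz
    rw [Metric.mem_ball, dist_zero_right]
    simp only [Prod.norm_def, Real.norm_eq_abs, max_lt_iff]
    exact ⟨hx, hy, hz⟩
  have hprojB : ∀ p : ℝ × ℝ × ℝ, p ∈ Metric.ball (0 : ℝ × ℝ × ℝ) r →
      |p.1| < r ∧ |p.2.1| < r ∧ |p.2.2| < r := by
    intro p hp
    rw [Metric.mem_ball, dist_zero_right] at hp
    simp only [Prod.norm_def, Real.norm_eq_abs, max_lt_iff] at hp
    exact ⟨hp.1, hp.2.1, hp.2.2⟩
  have himg1 : ∀ t : ℝ, |t| < r → t ∈ (fun p : ℝ × ℝ × ℝ => p.1) '' Metric.ball 0 r :=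
    fun t ht => ⟨(t, 0, 0), hmemB t 0 0 ht h0r h0r, rfl⟩
  have himg2 : ∀ t : ℝ, |t| < r → t ∈ (fun p : ℝ × ℝ × ℝ => p.2.1) '' Metric.ball 0 r :=
    fun t ht => ⟨(0, t, 0), hmemB 0 t 0 h0r ht h0r, rfl⟩
  have himg3 : ∀ t : ℝ, |t| < r → t ∈ (fun p : ℝ × ℝ × ℝ => p.2.2) '' Metric.ball 0 r :=
    fun t ht => ⟨(0, 0, t), hmemB 0 0 t h0r h0r ht, rfl⟩
  obtain ⟨H₁, φ₁, δ₁, ρ₁, hδ₁0, hρ₁0, hφ₁0, hpk₁, hqk₁⟩ :=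
    coord_package hr (fun t ht => ha₁ t (himg1 t ht)) (fun t ht => ha₁0 t (himg1 t ht))
  obtain ⟨H₂, φ₂, δ₂, ρ₂, hδ₂0, hρ₂0, hφ₂0, hpk₂, hqk₂⟩ :=
    coord_package hr (fun t ht => ha₂ t (himg2 t ht)) (fun t ht => ha₂0 t (himg2 t ht))
  obtain ⟨H₃, φ₃, δ₃, ρ₃, hδ₃0, hρ₃0, hφ₃0, hpk₃, hqk₃⟩ :=
    coord_package hr (fun t ht => ha₃ t (himg3 t ht)) (fun t ht => ha₃0 t (himg3 t ht))
  set ε : ℝ := min ρ₁ (min ρ₂ ρ₃) / 4 with hεdef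
  have hε0 : 0 < ε := by
    have := lt_min hρ₁0 (lt_min hρ₂0 hρ₃0)
    positivity
  have h4ε₁ : 4 * ε ≤ ρ₁ := by
    have h := min_le_left ρ₁ (min ρ₂ ρ₃); rw [hεdef]; linarith
  have h4ε₂ : 4 * ε ≤ ρ₂ := by
    have h := (min_le_right ρ₁ (min ρ₂ ρ₃)).trans (min_le_left ρ₂ ρ₃); rw [hεdef]; linarith
  have h4ε₃ : 4 * ε ≤ ρ₃ := by
    have h := (min_le_right ρ₁ (min ρ₂ ρ₃)).trans (min_le_right ρ₂ ρ₃); rw [hεdef]; linarith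
  set g : ℝ × ℝ × ℝ → ℝ := fun u => f (φ₁ u.1, φ₂ u.2.1, φ₃ u.2.2) with hgdef
  -- facts within the 4ε box
  have hq₁ : ∀ z : ℝ, |z - H₁ 0| < 4 * ε → AnalyticAt ℝ φ₁ z ∧ H₁ (φ₁ z) = z ∧ |φ₁ z| < δ₁ ∧
      HasDerivAt φ₁ (a₁ (φ₁ z)) z := fun z hz => hqk₁ z (lt_of_lt_of_le hz h4ε₁)
  have hq₂ : ∀ z : ℝ, |z - H₂ 0| < 4 * ε → AnalyticAt ℝ φ₂ z ∧ H₂ (φ₂ z) = z ∧ |φ₂ z| < δ₂ ∧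
      HasDerivAt φ₂ (a₂ (φ₂ z)) z := fun z hz => hqk₂ z (lt_of_lt_of_le hz h4ε₂)
  have hq₃ : ∀ z : ℝ, |z - H₃ 0| < 4 * ε → AnalyticAt ℝ φ₃ z ∧ H₃ (φ₃ z) = z ∧ |φ₃ z| < δ₃ ∧
      HasDerivAt φ₃ (a₃ (φ₃ z)) z := fun z hz => hqk₃ z (lt_of_lt_of_le hz h4ε₃)
  have hΦB : ∀ z₁ z₂ z₃ : ℝ, |z₁ - H₁ 0| < 4 * ε → |z₂ - H₂ 0| < 4 * ε → |z₃ - H₃ 0| < 4 * ε →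
      ((φ₁ z₁, φ₂ z₂, φ₃ z₃) : ℝ × ℝ × ℝ) ∈ Metric.ball (0 : ℝ × ℝ × ℝ) r := by
    intro z₁ z₂ z₃ h1 h2 h3
    exact hmemB _ _ _ (hpk₁ _ (hq₁ z₁ h1).2.2.1).1 (hpk₂ _ (hq₂ z₂ h2).2.2.1).1
      (hpk₃ _ (hq₃ z₃ h3).2.2.1).1
  have hpde13 : ∀ p ∈ Metric.ball (0 : ℝ × ℝ × ℝ) r,
      a₁ p.1 * pd1 f p - a₃ p.2.2 * pd3 f p = 0 := by
    intro p hp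
    have h1 := hpde1 p hp
    have h2 := hpde2 p hp
    linarith
  -- directional derivative along (1, -1, 0) vanishes
  have hdir12 : ∀ w₁ w₂ w₃ : ℝ, |w₁ - H₁ 0| < 4 * ε → |w₂ - H₂ 0| < 4 * ε →
      |w₃ - H₃ 0| < 4 * ε → HasDerivAt (fun t : ℝ => g (w₁ + t, w₂ - t, w₃)) 0 0 := by
    intro w₁ w₂ w₃ h1 h2 h3
    obtain ⟨hφ₁a, hH₁inv, hφ₁δ, hφ₁d⟩ := hq₁ w₁ h1
    obtain ⟨hφ₂a, hH₂inv, hφ₂δ, hφ₂d⟩ := hq₂ w₂ h2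
    obtain ⟨hφ₃a, hH₃inv, hφ₃δ, hφ₃d⟩ := hq₃ w₃ h3
    have hc₁ : HasDerivAt (fun t : ℝ => φ₁ (w₁ + t)) (a₁ (φ₁ w₁)) 0 := by
      have hin : HasDerivAt (fun t : ℝ => w₁ + t) 1 0 := by
        simpa using (hasDerivAt_id (0 : ℝ)).const_add w₁
      have hout : HasDerivAt φ₁ (a₁ (φ₁ ((fun t : ℝ => w₁ + t) 0))) ((fun t : ℝ => w₁ + t) 0) := by
        simpa using hφ₁d
      simpa [Function.comp_def] using hout.comp (0 : ℝ) hin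
    have hc₂ : HasDerivAt (fun t : ℝ => φ₂ (w₂ - t)) (-(a₂ (φ₂ w₂))) 0 := by
      have hin : HasDerivAt (fun t : ℝ => w₂ - t) (-1) 0 := by
        simpa using (hasDerivAt_id (0 : ℝ)).const_sub w₂
      have hout : HasDerivAt φ₂ (a₂ (φ₂ ((fun t : ℝ => w₂ - t) 0))) ((fun t : ℝ => w₂ - t) 0) := by
        simpa using hφ₂d
      have := hout.comp (0 : ℝ) hin
      simpa [Function.comp_def] using this
    have hc : HasDerivAt (fun t : ℝ => ((φ₁ (w₁ + t), φ₂ (w₂ - t), φ₃ w₃) : ℝ × ℝ × ℝ))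
        ((a₁ (φ₁ w₁), -(a₂ (φ₂ w₂)), 0)) 0 :=
      hc₁.prodMk (hc₂.prodMk (hasDerivAt_const 0 _))
    have hqB : ((φ₁ w₁, φ₂ w₂, φ₃ w₃) : ℝ × ℝ × ℝ) ∈ Metric.ball (0 : ℝ × ℝ × ℝ) r :=
      hΦB w₁ w₂ w₃ h1 h2 h3
    have hfa : AnalyticAt ℝ f ((φ₁ w₁, φ₂ w₂, φ₃ w₃) : ℝ × ℝ × ℝ) := hf _ hqB
    have hfd : HasFDerivAt f (fderiv ℝ f ((φ₁ w₁, φ₂ w₂, φ₃ w₃) : ℝ × ℝ × ℝ))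
        ((fun t : ℝ => ((φ₁ (w₁ + t), φ₂ (w₂ - t), φ₃ w₃) : ℝ × ℝ × ℝ)) 0) := by
      simpa using hfa.differentiableAt.hasFDerivAt
    have hcv := hfd.comp_hasDerivAt 0 hc
    have hval : fderiv ℝ f ((φ₁ w₁, φ₂ w₂, φ₃ w₃) : ℝ × ℝ × ℝ)
        ((a₁ (φ₁ w₁), -(a₂ (φ₂ w₂)), 0) : ℝ × ℝ × ℝ) = 0 := by
      rw [fderiv_decomp hfa]
      have hp := hpde1 _ hqB
      simp only at hp ⊢
      nlinarith [hp]
    rw [hval] at hcv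
    exact hcv
  -- directional derivative along (1, 0, -1) vanishes
  have hdir13 : ∀ w₁ w₂ w₃ : ℝ, |w₁ - H₁ 0| < 4 * ε → |w₂ - H₂ 0| < 4 * ε →
      |w₃ - H₃ 0| < 4 * ε → HasDerivAt (fun t : ℝ => g (w₁ + t, w₂, w₃ - t)) 0 0 := by
    intro w₁ w₂ w₃ h1 h2 h3
    obtain ⟨hφ₁a, hH₁inv, hφ₁δ, hφ₁d⟩ := hq₁ w₁ h1
    obtain ⟨hφ₂a, hH₂inv, hφ₂δ, hφ₂d⟩ := hq₂ w₂ h2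
    obtain ⟨hφ₃a, hH₃inv, hφ₃δ, hφ₃d⟩ := hq₃ w₃ h3
    have hc₁ : HasDerivAt (fun t : ℝ => φ₁ (w₁ + t)) (a₁ (φ₁ w₁)) 0 := by
      have hin : HasDerivAt (fun t : ℝ => w₁ + t) 1 0 := by
        simpa using (hasDerivAt_id (0 : ℝ)).const_add w₁
      have hout : HasDerivAt φ₁ (a₁ (φ₁ ((fun t : ℝ => w₁ + t) 0))) ((fun t : ℝ => w₁ + t) 0) := by
        simpa using hφ₁d
      simpa [Function.comp_def] using hout.comp (0 : ℝ) hin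
    have hc₃ : HasDerivAt (fun t : ℝ => φ₃ (w₃ - t)) (-(a₃ (φ₃ w₃))) 0 := by
      have hin : HasDerivAt (fun t : ℝ => w₃ - t) (-1) 0 := by
        simpa using (hasDerivAt_id (0 : ℝ)).const_sub w₃
      have hout : HasDerivAt φ₃ (a₃ (φ₃ ((fun t : ℝ => w₃ - t) 0))) ((fun t : ℝ => w₃ - t) 0) := by
        simpa using hφ₃d
      have := hout.comp (0 : ℝ) hin
      simpa [Function.comp_def] using this
    have hc : HasDerivAt (fun t : ℝ => ((φ₁ (w₁ + t), φ₂ w₂, φ₃ (w₃ - t)) : ℝ × ℝ × ℝ))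
        ((a₁ (φ₁ w₁), 0, -(a₃ (φ₃ w₃))) : ℝ × ℝ × ℝ) 0 :=
      hc₁.prodMk ((hasDerivAt_const 0 _).prodMk hc₃)
    have hqB : ((φ₁ w₁, φ₂ w₂, φ₃ w₃) : ℝ × ℝ × ℝ) ∈ Metric.ball (0 : ℝ × ℝ × ℝ) r :=
      hΦB w₁ w₂ w₃ h1 h2 h3
    have hfa : AnalyticAt ℝ f ((φ₁ w₁, φ₂ w₂, φ₃ w₃) : ℝ × ℝ × ℝ) := hf _ hqB
    have hfd : HasFDerivAt f (fderiv ℝ f ((φ₁ w₁, φ₂ w₂, φ₃ w₃) : ℝ × ℝ × ℝ))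
        ((fun t : ℝ => ((φ₁ (w₁ + t), φ₂ w₂, φ₃ (w₃ - t)) : ℝ × ℝ × ℝ)) 0) := by
      simpa using hfa.differentiableAt.hasFDerivAt
    have hcv := hfd.comp_hasDerivAt 0 hc
    have hval : fderiv ℝ f ((φ₁ w₁, φ₂ w₂, φ₃ w₃) : ℝ × ℝ × ℝ)
        ((a₁ (φ₁ w₁), 0, -(a₃ (φ₃ w₃))) : ℝ × ℝ × ℝ) = 0 := by
      rw [fderiv_decomp hfa]
      have hp := hpde13 _ hqB
      simp only at hp ⊢
      nlinarith [hp]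
    rw [hval] at hcv
    exact hcv
  -- helper: |t| ≤ |b| on uIcc 0 b
  have habs : ∀ t b : ℝ, t ∈ uIcc (0 : ℝ) b → |t| ≤ |b| := by
    intro t b ht
    rcases Set.mem_uIcc.1 ht with ⟨h, h'⟩ | ⟨h, h'⟩ <;> rw [abs_le] <;>
      constructor <;> nlinarith [le_abs_self b, neg_abs_le b]
  have hsmul0 : ContinuousLinearMap.smulRight (1 : ℝ →L[ℝ] ℝ) (0 : ℝ) = 0 := by
    ext x; simp
  -- move along (1, -1, 0)
  have hmove12 : ∀ v₁ v₂ v₃ b : ℝ, |v₁ - H₁ 0| + |b| < 4 * ε → |v₂ - H₂ 0| + |b| < 4 * ε →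
      |v₃ - H₃ 0| < 4 * ε → g (v₁ + b, v₂ - b, v₃) = g (v₁, v₂, v₃) := by
    intro v₁ v₂ v₃ b hb1 hb2 h3
    set k : ℝ → ℝ := fun t => g (v₁ + t, v₂ - t, v₃) with hk
    have hkder : ∀ t ∈ uIcc (0 : ℝ) b, HasDerivAt k 0 t := by
      intro t ht
      have htb : |t| ≤ |b| := habs t b ht
      have hA := hdir12 (v₁ + t) (v₂ - t) v₃
        (by
          have : |v₁ + t - H₁ 0| ≤ |v₁ - H₁ 0| + |t| := by
            calc |v₁ + t - H₁ 0| = |(v₁ - H₁ 0) + t| := by ring_nf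
              _ ≤ |v₁ - H₁ 0| + |t| := abs_add_le _ _
          linarith)
        (by
          have : |v₂ - t - H₂ 0| ≤ |v₂ - H₂ 0| + |t| := by
            calc |v₂ - t - H₂ 0| = |(v₂ - H₂ 0) + (-t)| := by ring_nf
              _ ≤ |v₂ - H₂ 0| + |(-t)| := abs_add_le _ _
              _ = |v₂ - H₂ 0| + |t| := by rw [abs_neg]
          linarith)
        h3
      have hAt' : HasDerivAt (fun s : ℝ => g ((v₁ + t) + s, (v₂ - t) - s, v₃)) 0 0 := hA
      have hcomp := HasDerivAt.comp_of_eq (x := t) hAt' ((hasDerivAt_id t).sub_const t) (by simp)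
      have hfun : (fun τ : ℝ => g (v₁ + τ, v₂ - τ, v₃)) = (fun s : ℝ => g ((v₁ + t) + s, (v₂ - t) - s, v₃)) ∘ (fun τ : ℝ => τ - t) := by
        funext τ
        show g (v₁ + τ, v₂ - τ, v₃) = g ((v₁ + t) + (τ - t), (v₂ - t) - (τ - t), v₃)
        have e1 : v₁ + τ = (v₁ + t) + (τ - t) := by ring
        have e2 : v₂ - τ = (v₂ - t) - (τ - t) := by ring
        rw [← e1, ← e2]
      show HasDerivAt (fun τ : ℝ => g (v₁ + τ, v₂ - τ, v₃)) 0 t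
      rw [hfun]
      simpa using hcomp
    have hfw : ∀ t ∈ uIcc (0 : ℝ) b, HasFDerivWithinAt k (0 : ℝ →L[ℝ] ℝ) (uIcc (0 : ℝ) b) t := by
      intro t ht
      have := ((hkder t ht).hasFDerivAt).hasFDerivWithinAt (s := uIcc (0 : ℝ) b)
      rwa [ContinuousLinearMap.toSpanSingleton_zero] at this
    have hMVT := (convex_uIcc (0 : ℝ) b).norm_image_sub_le_of_norm_hasFDerivWithin_le (C := 0) hfw
      (fun t _ => by simp) right_mem_uIcc left_mem_uIcc
    have hkb : k b = k 0 := by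
      have h1 : ‖k 0 - k b‖ ≤ 0 := by simpa using hMVT
      have h2 := le_antisymm h1 (norm_nonneg _)
      rw [norm_eq_zero, sub_eq_zero] at h2
      exact h2.symm
    simpa [hk] using hkb
  -- move along (1, 0, -1)
  have hmove13 : ∀ v₁ v₂ v₃ b : ℝ, |v₁ - H₁ 0| + |b| < 4 * ε → |v₂ - H₂ 0| < 4 * ε →
      |v₃ - H₃ 0| + |b| < 4 * ε → g (v₁ + b, v₂, v₃ - b) = g (v₁, v₂, v₃) := by
    intro v₁ v₂ v₃ b hb1 h2 hb3
    set k : ℝ → ℝ := fun t => g (v₁ + t, v₂, v₃ - t) with hk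
    have hkder : ∀ t ∈ uIcc (0 : ℝ) b, HasDerivAt k 0 t := by
      intro t ht
      have htb : |t| ≤ |b| := habs t b ht
      have hA := hdir13 (v₁ + t) v₂ (v₃ - t)
        (by
          have : |v₁ + t - H₁ 0| ≤ |v₁ - H₁ 0| + |t| := by
            calc |v₁ + t - H₁ 0| = |(v₁ - H₁ 0) + t| := by ring_nf
              _ ≤ |v₁ - H₁ 0| + |t| := abs_add_le _ _
          linarith)
        h2
        (by
          have : |v₃ - t - H₃ 0| ≤ |v₃ - H₃ 0| + |t| := by
            calc |v₃ - t - H₃ 0| = |(v₃ - H₃ 0) + (-t)| := by ring_nf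
              _ ≤ |v₃ - H₃ 0| + |(-t)| := abs_add_le _ _
              _ = |v₃ - H₃ 0| + |t| := by rw [abs_neg]
          linarith)
      have hAt' : HasDerivAt (fun s : ℝ => g ((v₁ + t) + s, v₂, (v₃ - t) - s)) 0 0 := hA
      have hcomp := HasDerivAt.comp_of_eq (x := t) hAt' ((hasDerivAt_id t).sub_const t) (by simp)
      have hfun : (fun τ : ℝ => g (v₁ + τ, v₂, v₃ - τ)) = (fun s : ℝ => g ((v₁ + t) + s, v₂, (v₃ - t) - s)) ∘ (fun τ : ℝ => τ - t) := by
        funext τ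
        show g (v₁ + τ, v₂, v₃ - τ) = g ((v₁ + t) + (τ - t), v₂, (v₃ - t) - (τ - t))
        have e1 : v₁ + τ = (v₁ + t) + (τ - t) := by ring
        have e2 : v₃ - τ = (v₃ - t) - (τ - t) := by ring
        rw [← e1, ← e2]
      show HasDerivAt (fun τ : ℝ => g (v₁ + τ, v₂, v₃ - τ)) 0 t
      rw [hfun]
      simpa using hcomp
    have hfw : ∀ t ∈ uIcc (0 : ℝ) b, HasFDerivWithinAt k (0 : ℝ →L[ℝ] ℝ) (uIcc (0 : ℝ) b) t := by
      intro t ht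
      have := ((hkder t ht).hasFDerivAt).hasFDerivWithinAt (s := uIcc (0 : ℝ) b)
      rwa [ContinuousLinearMap.toSpanSingleton_zero] at this
    have hMVT := (convex_uIcc (0 : ℝ) b).norm_image_sub_le_of_norm_hasFDerivWithin_le (C := 0) hfw
      (fun t _ => by simp) right_mem_uIcc left_mem_uIcc
    have hkb : k b = k 0 := by
      have h1 : ‖k 0 - k b‖ ≤ 0 := by simpa using hMVT
      have h2 := le_antisymm h1 (norm_nonneg _)
      rw [norm_eq_zero, sub_eq_zero] at h2
      exact h2.symm
    simpa [hk] using hkb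
  -- G₀ and the key identity
  set G₀ : ℝ → ℝ := fun s => g (s - H₂ 0 - H₃ 0, H₂ 0, H₃ 0) with hG₀def
  have hkey : ∀ v₁ v₂ v₃ : ℝ, |v₁ - H₁ 0| < ε → |v₂ - H₂ 0| < ε → |v₃ - H₃ 0| < ε →
      g (v₁, v₂, v₃) = G₀ (v₁ + v₂ + v₃) := by
    intro v₁ v₂ v₃ h1 h2 h3
    have e1 : g (v₁ + (v₂ - H₂ 0), v₂ - (v₂ - H₂ 0), v₃) = g (v₁, v₂, v₃) :=
      hmove12 v₁ v₂ v₃ (v₂ - H₂ 0) (by linarith) (by linarith) (by linarith)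
    have e1' : g (v₁ + (v₂ - H₂ 0), H₂ 0, v₃) = g (v₁, v₂, v₃) := by
      have harg : v₂ - (v₂ - H₂ 0) = H₂ 0 := by ring
      rwa [harg] at e1
    have e2 : g ((v₁ + (v₂ - H₂ 0)) + (v₃ - H₃ 0), H₂ 0, v₃ - (v₃ - H₃ 0)) =
        g (v₁ + (v₂ - H₂ 0), H₂ 0, v₃) := by
      apply hmove13
      · have : |v₁ + (v₂ - H₂ 0) - H₁ 0| ≤ |v₁ - H₁ 0| + |v₂ - H₂ 0| := by
          calc |v₁ + (v₂ - H₂ 0) - H₁ 0| = |(v₁ - H₁ 0) + (v₂ - H₂ 0)| := by ring_nf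
            _ ≤ |v₁ - H₁ 0| + |v₂ - H₂ 0| := abs_add_le _ _
        have h3' : |v₃ - H₃ 0| ≥ 0 := abs_nonneg _
        linarith
      · simpa using (by positivity : (0:ℝ) < 4 * ε)
      · linarith
    have e2' : g (v₁ + v₂ + v₃ - H₂ 0 - H₃ 0, H₂ 0, H₃ 0) = g (v₁ + (v₂ - H₂ 0), H₂ 0, v₃) := by
      have harg1 : (v₁ + (v₂ - H₂ 0)) + (v₃ - H₃ 0) = v₁ + v₂ + v₃ - H₂ 0 - H₃ 0 := by ring
      have harg2 : v₃ - (v₃ - H₃ 0) = H₃ 0 := by ring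
      rwa [harg1, harg2] at e2
    rw [← e1', ← e2']
  -- definition of W
  set V₁ : Set ℝ := Metric.ball 0 δ₁ ∩ H₁ ⁻¹' (Metric.ball (H₁ 0) ε) with hV₁def
  set V₂ : Set ℝ := Metric.ball 0 δ₂ ∩ H₂ ⁻¹' (Metric.ball (H₂ 0) ε) with hV₂def
  set V₃ : Set ℝ := Metric.ball 0 δ₃ ∩ H₃ ⁻¹' (Metric.ball (H₃ 0) ε) with hV₃def
  have hV₁mem : ∀ t : ℝ, t ∈ V₁ ↔ (|t| < δ₁ ∧ |H₁ t - H₁ 0| < ε) := by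
    intro t; simp [hV₁def, Real.dist_eq]
  have hV₂mem : ∀ t : ℝ, t ∈ V₂ ↔ (|t| < δ₂ ∧ |H₂ t - H₂ 0| < ε) := by
    intro t; simp [hV₂def, Real.dist_eq]
  have hV₃mem : ∀ t : ℝ, t ∈ V₃ ↔ (|t| < δ₃ ∧ |H₃ t - H₃ 0| < ε) := by
    intro t; simp [hV₃def, Real.dist_eq]
  have hV₁open : IsOpen V₁ := by
    apply ContinuousOn.isOpen_inter_preimage _ Metric.isOpen_ball Metric.isOpen_ball
    intro t ht
    rw [Metric.mem_ball, Real.dist_eq, sub_zero] at ht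
    exact ((hpk₁ t ht).2.1).continuousAt.continuousWithinAt
  have hV₂open : IsOpen V₂ := by
    apply ContinuousOn.isOpen_inter_preimage _ Metric.isOpen_ball Metric.isOpen_ball
    intro t ht
    rw [Metric.mem_ball, Real.dist_eq, sub_zero] at ht
    exact ((hpk₂ t ht).2.1).continuousAt.continuousWithinAt
  have hV₃open : IsOpen V₃ := by
    apply ContinuousOn.isOpen_inter_preimage _ Metric.isOpen_ball Metric.isOpen_ball
    intro t ht
    rw [Metric.mem_ball, Real.dist_eq, sub_zero] at ht
    exact ((hpk₃ t ht).2.1).continuousAt.continuousWithinAt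
  set W : Set (ℝ × ℝ × ℝ) := (fun p : ℝ × ℝ × ℝ => p.1) ⁻¹' V₁ ∩
      ((fun p : ℝ × ℝ × ℝ => p.2.1) ⁻¹' V₂ ∩ (fun p : ℝ × ℝ × ℝ => p.2.2) ⁻¹' V₃) with hWdef
  have hWopen : IsOpen W := by
    apply IsOpen.inter (hV₁open.preimage continuous_fst)
    exact IsOpen.inter (hV₂open.preimage (continuous_fst.comp continuous_snd))
      (hV₃open.preimage (continuous_snd.comp continuous_snd))
  have hW0 : (0 : ℝ × ℝ × ℝ) ∈ W := by
    refine ⟨?_, ?_, ?_⟩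
    · rw [mem_preimage]; rw [hV₁mem]
      constructor
      · simpa using hδ₁0
      · simpa using hε0
    · rw [mem_preimage]; rw [hV₂mem]
      constructor
      · simpa using hδ₂0
      · simpa using hε0
    · rw [mem_preimage]; rw [hV₃mem]
      constructor
      · simpa using hδ₃0
      · simpa using hε0
  have hWB : W ⊆ Metric.ball (0 : ℝ × ℝ × ℝ) r := by
    rintro x ⟨h1, h2, h3⟩
    rw [mem_preimage] at h1 h2 h3
    rw [hV₁mem] at h1; rw [hV₂mem] at h2; rw [hV₃mem] at h3
    have := hmemB x.1 x.2.1 x.2.2 (hpk₁ _ h1.1).1 (hpk₂ _ h2.1).1 (hpk₃ _ h3.1).1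
    simpa using this
  refine ⟨W, hWopen, ⟨0, hW0⟩, hWB, G₀, H₁, H₂, H₃, ?_, ?_, ?_, ?_, ?_⟩
  · rintro t ⟨x, hx, rfl⟩
    have h1 := hx.1
    rw [mem_preimage, hV₁mem] at h1
    exact (hpk₁ _ h1.1).2.1
  · rintro t ⟨x, hx, rfl⟩
    have h2 := hx.2.1
    rw [mem_preimage, hV₂mem] at h2
    exact (hpk₂ _ h2.1).2.1
  · rintro t ⟨x, hx, rfl⟩
    have h3 := hx.2.2
    rw [mem_preimage, hV₃mem] at h3
    exact (hpk₃ _ h3.1).2.1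
  · -- analyticity of G₀ on the image of the sum
    rintro s ⟨x, hx, rfl⟩
    obtain ⟨h1, h2, h3⟩ := hx
    rw [mem_preimage, hV₁mem] at h1
    rw [mem_preimage, hV₂mem] at h2
    rw [mem_preimage, hV₃mem] at h3
    set s₀ : ℝ := H₁ x.1 + H₂ x.2.1 + H₃ x.2.2 with hs₀
    have hzbound : |s₀ - H₂ 0 - H₃ 0 - H₁ 0| < 4 * ε := by
      have : |s₀ - H₂ 0 - H₃ 0 - H₁ 0| ≤
          |H₁ x.1 - H₁ 0| + |H₂ x.2.1 - H₂ 0| + |H₃ x.2.2 - H₃ 0| := by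
        rw [hs₀]
        calc |H₁ x.1 + H₂ x.2.1 + H₃ x.2.2 - H₂ 0 - H₃ 0 - H₁ 0|
            = |(H₁ x.1 - H₁ 0) + ((H₂ x.2.1 - H₂ 0) + (H₃ x.2.2 - H₃ 0))| := by ring_nf
          _ ≤ |H₁ x.1 - H₁ 0| + |(H₂ x.2.1 - H₂ 0) + (H₃ x.2.2 - H₃ 0)| := abs_add_le _ _
          _ ≤ |H₁ x.1 - H₁ 0| + (|H₂ x.2.1 - H₂ 0| + |H₃ x.2.2 - H₃ 0|) := by
              have := abs_add_le (H₂ x.2.1 - H₂ 0) (H₃ x.2.2 - H₃ 0)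
              linarith
          _ = _ := by ring
      linarith [h1.2, h2.2, h3.2]
    -- G₀ is f composed with an analytic map
    obtain ⟨hφ₁a, hH₁inv, hφ₁δ, _⟩ := hq₁ (s₀ - H₂ 0 - H₃ 0) hzbound
    have haff : AnalyticAt ℝ (fun s : ℝ => s - H₂ 0 - H₃ 0) s₀ :=
      (analyticAt_id.sub analyticAt_const).sub analyticAt_const
    have hcomp1 : AnalyticAt ℝ (fun s : ℝ => φ₁ (s - H₂ 0 - H₃ 0)) s₀ :=
      AnalyticAt.comp (g := φ₁) (f := fun s : ℝ => s - H₂ 0 - H₃ 0) (x := s₀) hφ₁a haff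
    have hinner : AnalyticAt ℝ
        (fun s : ℝ => ((φ₁ (s - H₂ 0 - H₃ 0), φ₂ (H₂ 0), φ₃ (H₃ 0)) : ℝ × ℝ × ℝ)) s₀ :=
      hcomp1.prod analyticAt_const
    have hmem : ((φ₁ (s₀ - H₂ 0 - H₃ 0), φ₂ (H₂ 0), φ₃ (H₃ 0)) : ℝ × ℝ × ℝ) ∈
        Metric.ball (0 : ℝ × ℝ × ℝ) r := by
      rw [hφ₂0, hφ₃0]
      exact hmemB _ _ _ (hpk₁ _ hφ₁δ).1 h0r h0r
    exact AnalyticAt.comp (g := f)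
      (f := fun s : ℝ => ((φ₁ (s - H₂ 0 - H₃ 0), φ₂ (H₂ 0), φ₃ (H₃ 0)) : ℝ × ℝ × ℝ))
      (x := s₀) (hf _ hmem) hinner
  · -- the functional equation
    intro x hx
    obtain ⟨h1, h2, h3⟩ := hx
    rw [mem_preimage, hV₁mem] at h1
    rw [mem_preimage, hV₂mem] at h2
    rw [mem_preimage, hV₃mem] at h3
    have hgu : g (H₁ x.1, H₂ x.2.1, H₃ x.2.2) = f x := by
      show f (φ₁ (H₁ x.1), φ₂ (H₂ x.2.1), φ₃ (H₃ x.2.2)) = f x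
      rw [(hpk₁ _ h1.1).2.2, (hpk₂ _ h2.1).2.2, (hpk₃ _ h3.1).2.2]
    rw [← hgu]
    exact hkey (H₁ x.1) (H₂ x.2.1) (H₃ x.2.2) h1.2 h2.2 h3.2
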